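/- Let A = ⟨a_α : α < ω₁⟩ be a proper coherent sequence of subsets of ℕ with the ScP. If S ⊆ ω₁ is a cover, then there is a finite F ⊆ ω₁ such that for every α ∈ ω₁ ∖ â_F, the set {γ ∈ S : α ∈ â_γ} is uncountable. -/

import Mathlib

open Set

noncomputable section

/-- The least uncountable ordinal `ω₁`. -/
def omega1 : Ordinal := (Cardinal.aleph 1).ord

/-- `⋃_{γ ∈ F} a_γ` for a finite set `F` of indices. -/
def unionFin (a : Ordinal → Set ℕ) (F : Finset Ordinal) : Set ℕ :=
  ⋃ γ ∈ F, a γ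

/-- A sequence of subsets of `ℕ`, with indices from a (downward closed) domain `D`
of ordinals, is coherent if for all `α ≤ β` in the domain there is a finite `F ⊆ α`
with `a α ∩ a β ⊆ ⋃_{γ∈F} a γ` or `a α ⊆ a β ∪ ⋃_{γ∈F} a γ`. -/
def CoherentOn (D : Set Ordinal) (a : Ordinal → Set ℕ) : Prop :=
  ∀ α β : Ordinal, α ≤ β → β ∈ D →
    ∃ F : Finset Ordinal, (∀ γ ∈ F, γ < α) ∧
      (a α ∩ a β ⊆ unionFin a F ∨ a α ⊆ a β ∪ unionFin a F)

/-- Properness: no `a β` is contained in a finite union of earlier terms. -/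
def ProperOn (D : Set Ordinal) (a : Ordinal → Set ℕ) : Prop :=
  ∀ β ∈ D, ∀ F : Finset Ordinal, (∀ γ ∈ F, γ < β) → ¬ a β ⊆ unionFin a F

/-- `â_β = { α ≤ β : a α ∖ a β ⊆ ⋃_{γ∈F} a γ for some finite F ⊆ α }`. -/
def hatA (a : Ordinal → Set ℕ) (β : Ordinal) : Set Ordinal :=
  { α | α ≤ β ∧ ∃ F : Finset Ordinal, (∀ γ ∈ F, γ < α) ∧ a α \ a β ⊆ unionFin a F }

/-- The topology `τ(A)` on `λ + 1 = {α : α ≤ λ}` generated by the subbase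
consisting of the sets `â_β` and their complements, `β < λ`. -/
def tau (lam : Ordinal) (a : Ordinal → Set ℕ) :
    TopologicalSpace {α : Ordinal // α ≤ lam} :=
  TopologicalSpace.generateFrom
    { s | ∃ β < lam, s = {x : {α : Ordinal // α ≤ lam} | x.1 ∈ hatA a β} ∨
                     s = {x : {α : Ordinal // α ≤ lam} | x.1 ∈ hatA a β}ᶜ }

/-- The subspace `ω₁ = {α : α < ω₁}` of `(ω₁+1, τ(A))`. -/
def tauSub (a : Ordinal → Set ℕ) : TopologicalSpace {y : Ordinal // y < omega1} :=
  TopologicalSpace.induced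
    (fun y : {y : Ordinal // y < omega1} => (⟨y.1, y.2.le⟩ : {α : Ordinal // α ≤ omega1}))
    (tau omega1 a)

/-- Closed unbounded subsets of `ω₁`. -/
def IsClubOmega1 (C : Set Ordinal) : Prop :=
  C ⊆ Iio omega1 ∧
  (∀ α < omega1, ∃ β ∈ C, α ≤ β) ∧
  (∀ δ, δ < omega1 → δ ≠ 0 → (∀ α < δ, ∃ β ∈ C, α < β ∧ β < δ) → δ ∈ C)

/-- Stationary subsets of `ω₁`: sets meeting every club. -/
def IsStationaryOmega1 (S : Set Ordinal) : Prop :=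
  ∀ C : Set Ordinal, IsClubOmega1 C → (S ∩ C).Nonempty

/-- The stationary covering property for a coherent sequence whose index domain is `D`:
if the sequence has length `ω₁` (i.e. `Iio ω₁ ⊆ D`), then every stationary `S ⊆ ω₁`
together with some finite `F` covers, i.e. `⋃_{γ ∈ S ∪ F} â_γ = ω₁`.  (Sequences of
length `< ω₁` have the ScP by convention.) -/
def HasScP (D : Set Ordinal) (a : Ordinal → Set ℕ) : Prop :=
  Iio omega1 ⊆ D →
    ∀ S : Set Ordinal, S ⊆ Iio omega1 → IsStationaryOmega1 S →
      ∃ F : Finset Ordinal, (⋃ γ ∈ S ∪ (↑F : Set Ordinal), hatA a γ) = Iio omega1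

/-- A node of the tree `2^{≤ω₁}`: a function `val` defined on the ordinals `< len`
(with the canonical value `false` beyond `len`). -/
structure Node where
  len : Ordinal
  val : Ordinal → Bool
  canon : ∀ α, len ≤ α → val α = false

open Classical in
/-- The restriction `x ↾ β`. -/
def Node.restrict (x : Node) (β : Ordinal) : Node where
  len := β
  val := fun α => if α < β then x.val α else false
  canon := fun α h => if_neg (not_lt.2 h)

/-- `τ.Extends σ` means `σ ⊆ τ`, i.e. `τ` extends `σ`. -/
def Node.Extends (τ σ : Node) : Prop :=
  σ.len ≤ τ.len ∧ ∀ α < σ.len, τ.val α = σ.val α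

/-- Successor ordinals. -/
def IsSucc (o : Ordinal) : Prop := ∃ β, o = β + 1

open Classical in
/-- `σ†`: if `σ` has successor length `β+1`, the node agreeing with `σ` except at `β`;
otherwise `σ` itself. -/
def Node.dagger (σ : Node) : Node :=
  if h : IsSucc σ.len then
    { len := σ.len
      val := fun α => if α = Classical.choose h then !(σ.val α) else σ.val α
      canon := by
        intro α hα
        have hs := Classical.choose_spec h
        have hne : α ≠ Classical.choose h := by
          intro he
          rw [hs, he] at hα
          rw [Ordinal.add_one_eq_succ] at hα
          exact absurd hα (not_le.2 (Order.lt_succ (Classical.choose h)))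
        show (if α = Classical.choose h then !(σ.val α) else σ.val α) = false
        rw [if_neg hne]
        exact σ.canon α hα }
  else σ

open Classical in
/-- `σ ⌢ b` : the node `σ` extended by one value `b`. -/
def Node.snoc (σ : Node) (b : Bool) : Node where
  len := σ.len + 1
  val := fun α => if α = σ.len then b else σ.val α
  canon := by
    intro α hα
    have h1 : σ.len < α := by
      have h2 : σ.len < σ.len + 1 := by
        rw [Ordinal.add_one_eq_succ]; exact Order.lt_succ σ.len
      exact lt_of_lt_of_le h2 hα
    show (if α = σ.len then b else σ.val α) = false
    rw [if_neg h1.ne']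
    exact σ.canon α h1.le

open Classical in
/-- `x ⌢ σ` : concatenation of nodes. -/
def Node.append (x σ : Node) : Node where
  len := x.len + σ.len
  val := fun α => if α < x.len then x.val α else σ.val (α - x.len)
  canon := by
    intro α hα
    have h1 : ¬ α < x.len := not_lt.2 (le_trans (le_self_add : x.len ≤ x.len + σ.len) hα)
    show (if α < x.len then x.val α else σ.val (α - x.len)) = false
    rw [if_neg h1]
    apply σ.canon
    by_contra h2
    rw [not_le] at h2
    have h3 : α ≤ x.len + (α - x.len) := Ordinal.le_add_sub α x.len
    have h4 : x.len + (α - x.len) < x.len + σ.len := by gcongr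
    exact absurd hα (not_le.2 (lt_of_le_of_lt h3 h4))

/-- A subtree of `2^{<ω₁}` that is downward closed, twinned and has no maximal elements. -/
structure GoodTree (Γ : Set Node) : Prop where
  lt_omega1 : ∀ σ ∈ Γ, σ.len < omega1
  downward : ∀ σ ∈ Γ, ∀ β ≤ σ.len, σ.restrict β ∈ Γ
  twinned : ∀ σ ∈ Γ, σ.dagger ∈ Γ
  noMax : ∀ σ ∈ Γ, ∃ τ ∈ Γ, σ.len < τ.len ∧ τ.Extends σ

/-- `X(Γ)`: the maximal branches of `Γ`, i.e. the minimal elements of `2^{≤ω₁} ∖ Γ`. -/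
def XGamma (Γ : Set Node) : Set Node :=
  { x | x.len ≤ omega1 ∧ x ∉ Γ ∧ ∀ β < x.len, x.restrict β ∈ Γ }

/-- The index domain of the branch sequence `A_{Γ,x}`. -/
def branchDomain (Γ : Set Node) (x : Node) : Set Ordinal :=
  { α | α + 1 ≤ x.len ∧ x.restrict (α + 1) ∈ Γ }

/-- The branch sequence `A_{Γ,x}`, `a^x_α = a_{x ↾ (α+1)}`. -/
def branchSeq (a : Node → Set ℕ) (x : Node) : Ordinal → Set ℕ :=
  fun α => a (x.restrict (α + 1))

/-- A `𝕋`-algebra on the tree `Γ`. -/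
structure IsTAlgebra (Γ : Set Node) (a : Node → Set ℕ) : Prop where
  tree : GoodTree Γ
  empty_of_not_succ : ∀ σ ∈ Γ, ¬ IsSucc σ.len → a σ = ∅
  compl_dagger : ∀ σ ∈ Γ, IsSucc σ.len → a σ.dagger = (a σ)ᶜ
  branch_coherent : ∀ x : Node, x.len ≤ omega1 →
    CoherentOn (branchDomain Γ x) (branchSeq a x)
  branch_proper : ∀ x : Node, x.len ≤ omega1 →
    ProperOn (branchDomain Γ x) (branchSeq a x)

/-- The Boolean subalgebra of `P(ℕ)` generated by a family `G`. -/
inductive GenBool (G : Set (Set ℕ)) : Set ℕ → Prop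
  | basic (s : Set ℕ) : s ∈ G → GenBool G s
  | empty : GenBool G ∅
  | compl (s : Set ℕ) : GenBool G s → GenBool G sᶜ
  | inter (s t : Set ℕ) : GenBool G s → GenBool G t → GenBool G (s ∩ t)

/-- `B_Γ`: the Boolean subalgebra of `P(ℕ)` generated by `{a_σ : σ ∈ Γ}`. -/
def BGamma (Γ : Set Node) (a : Node → Set ℕ) : Set (Set ℕ) :=
  { b | GenBool { s | ∃ σ ∈ Γ, s = a σ } b }

/-- A finite intersection from the family `{ℕ ∖ a_{x↾(α+1)} : α + 1 ≤ λ_x}`. -/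
def finInterCompl (a : Node → Set ℕ) (x : Node) (F : Finset Ordinal) : Set ℕ :=
  ⋂ α ∈ F, (a (x.restrict (α + 1)))ᶜ

/-- The ultrafilter `U_x` on `B_Γ` generated by the finite intersections of
`{ℕ ∖ a_{x↾(α+1)} : α + 1 ≤ λ_x}`. -/
def Ux (Γ : Set Node) (a : Node → Set ℕ) (x : Node) : Set (Set ℕ) :=
  { b | b ∈ BGamma Γ a ∧
    ∃ F : Finset Ordinal, (∀ α ∈ F, α + 1 ≤ x.len) ∧ finInterCompl a x F ⊆ b }

/-- The Stone topology on `X(Γ)`, with subbasic open sets `{z : b ∈ U_z}`, `b ∈ B_Γ`. -/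
def stoneTop (Γ : Set Node) (a : Node → Set ℕ) :
    TopologicalSpace {z : Node // z ∈ XGamma Γ} :=
  TopologicalSpace.generateFrom
    { s | ∃ b ∈ BGamma Γ a, s = { z : {z : Node // z ∈ XGamma Γ} | b ∈ Ux Γ a z.1 } }

/-- An ultrafilter on a Boolean subalgebra `B` of `P(ℕ)`. -/
def IsUltrafilterOn (B U : Set (Set ℕ)) : Prop :=
  U ⊆ B ∧
  (∀ s ∈ U, ∀ t ∈ U, s ∩ t ∈ U) ∧
  (∀ s ∈ U, ∀ t ∈ B, s ⊆ t → t ∈ U) ∧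
  ∅ ∉ U ∧
  (∀ b ∈ B, Xor' (b ∈ U) (bᶜ ∈ U))

/-- The length-lexicographic (strict) order on finite binary strings. -/
def LenLexLT (σ τ : Node) : Prop :=
  σ.len < τ.len ∨ (σ.len = τ.len ∧ ∃ i < σ.len, σ.val i = false ∧ τ.val i = true ∧
    ∀ j < i, σ.val j = τ.val j)

/-- `e` is the standard length-lexicographic enumeration of `2^{<ω}`. -/
def IsStdEnum (e : ℕ → Node) : Prop :=
  (∀ k, (e k).len < Ordinal.omega0) ∧
  (∀ σ : Node, σ.len < Ordinal.omega0 → ∃ k, e k = σ) ∧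
  (∀ k l : ℕ, k < l → LenLexLT (e k) (e l))

/-- `⋃_{k<n} c^x_k` where `c^x_n = a^x_{e(n)} ∖ ⋃_{k<n} c^x_k` (recursively). -/
def cUnion (a : Node → Set ℕ) (x : Node) (eb : ℕ → Ordinal) : ℕ → Set ℕ
  | 0 => ∅
  | n + 1 => cUnion a x eb n ∪ (a (x.restrict (eb n + 1)) \ cUnion a x eb n)

/-- `c^x_n = a^x_{e(n)} ∖ ⋃_{k<n} c^x_k`. -/
def cSeq (a : Node → Set ℕ) (x : Node) (eb : ℕ → Ordinal) (n : ℕ) : Set ℕ :=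
  a (x.restrict (eb n + 1)) \ cUnion a x eb n

/-- `{x ⌢ σ : σ ∈ 2^{<ω}}`. -/
def appendSet (x : Node) : Set Node :=
  { τ | ∃ σ : Node, σ.len < Ordinal.omega0 ∧ τ = x.append σ }

/-- The defining equations of the extension `A_Γ[π,x]`:
`a_x = ∅`, `a_{x⌢(σ⌢0)} = ⋃{c^x_k : σ⌢1 ⊆ σ_{π(k)}}`, `a_{x⌢(σ⌢1)} = ℕ ∖ a_{x⌢(σ⌢0)}`. -/
def ExtEquations (e : ℕ → Node) (π : ℕ → ℕ) (a : Node → Set ℕ) (x : Node)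
    (eb : ℕ → Ordinal) (a' : Node → Set ℕ) : Prop :=
  a' x = ∅ ∧
  ∀ σ : Node, σ.len < Ordinal.omega0 →
    (a' (x.append (σ.snoc false)) =
      ⋃ k ∈ { k : ℕ | (e (π k)).Extends (σ.snoc true) }, cSeq a x eb k) ∧
    (a' (x.append (σ.snoc true)) = (a' (x.append (σ.snoc false)))ᶜ)

/-- The full tree `2^{<ω₁}`. -/
def GammaFull : Set Node := { σ | σ.len < omega1 }

theorem natLtOmega1 (n : ℕ) : (n : Ordinal) < omega1 := by
  have h1 : (n : Ordinal) < Ordinal.omega0 := Ordinal.nat_lt_omega0 n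
  have h2 : Ordinal.omega0 < omega1 := by
    rw [omega1, ← Cardinal.ord_aleph0]
    exact Cardinal.ord_lt_ord.2 (by rw [← Cardinal.aleph_zero]
                                    exact Cardinal.aleph_lt_aleph.2 zero_lt_one)
  exact h1.trans h2


/-! ### Auxiliary club/stationary machinery for `stmt11` -/

section Stmt11Aux

open Classical

theorem omega1_isLimit : Order.IsSuccLimit omega1 :=
  Cardinal.isSuccLimit_ord (le_of_lt Cardinal.aleph0_lt_aleph_one)

theorem omega1_pos : 0 < omega1 := omega1_isLimit.pos

theorem succ_lt_omega1 {x : Ordinal} (h : x < omega1) : x + 1 < omega1 := by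
  rw [Ordinal.add_one_eq_succ]
  exact omega1_isLimit.succ_lt h

theorem lt_add_one_self (x : Ordinal) : x < x + 1 := by
  rw [Ordinal.add_one_eq_succ]; exact Order.lt_succ x

/-- A countable subset of `ω₁` is strictly bounded. -/
theorem bound_of_countable {A : Set Ordinal} (hA : A ⊆ Set.Iio omega1) (hc : A.Countable) :
    ∃ b, b < omega1 ∧ ∀ x ∈ A, x < b := by
  rcases A.eq_empty_or_nonempty with h | h
  · exact ⟨1, by simpa using succ_lt_omega1 omega1_pos, by simp [h]⟩
  · obtain ⟨f, hf⟩ := hc.exists_eq_range h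
    have hlt : ∀ n : ℕ, f n < omega1 := fun n => hA (by rw [hf]; exact Set.mem_range_self n)
    have hsup : (⨆ n, f n) < omega1 := (by have h := Ordinal.iSup_lt_omega_one (f := f) (by simpa [omega1, Cardinal.ord_aleph] using hlt); simpa [omega1, Cardinal.ord_aleph] using h)
    refine ⟨(⨆ n, f n) + 1, succ_lt_omega1 hsup, ?_⟩
    intro x hx
    rw [hf] at hx
    obtain ⟨n, rfl⟩ := hx
    exact lt_of_le_of_lt (le_ciSup (Ordinal.bddAbove_range f) n) (lt_add_one_self _)

theorem countable_Iio_omega1 {x : Ordinal} (h : x < omega1) : (Set.Iio x).Countable := by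
  have h1 : x.card < Cardinal.aleph 1 := Cardinal.lt_ord.mp h
  have h2 : x.card ≤ Cardinal.aleph0 := by
    rw [← Cardinal.succ_aleph0] at h1
    exact Order.lt_succ_iff.mp h1
  rw [← Cardinal.le_aleph0_iff_set_countable, Ordinal.mk_Iio_ordinal]
  simpa using Cardinal.lift_le.mpr h2

theorem countable_Iic_omega1 {x : Ordinal} (h : x < omega1) : (Set.Iic x).Countable := by
  have := countable_Iio_omega1 (succ_lt_omega1 h)
  refine Set.Countable.mono ?_ this
  intro y hy
  exact lt_of_le_of_lt hy (lt_add_one_self x)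

/-- Building an increasing `ω`-chain below `ω₁` with step predicate `Q`, together with its
supremum. -/
theorem build_limit (Q : ℕ → Ordinal → Ordinal → Prop) (x0 : Ordinal) (hx0 : x0 < omega1)
    (hstep : ∀ n x, x < omega1 → ∃ y, x < y ∧ y < omega1 ∧ Q n x y) :
    ∃ (g : ℕ → Ordinal) (lam : Ordinal),
      g 0 = x0 ∧ (∀ n, g n < omega1) ∧ (∀ n, Q n (g n) (g (n + 1))) ∧
      StrictMono g ∧ lam < omega1 ∧ (∀ n, g n < lam) ∧ (∀ β, β < lam → ∃ n, β < g n) := by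
  have pickex : ∀ (x : Ordinal) (n : ℕ), ∃ y, (x < omega1 → (x < y ∧ y < omega1 ∧ Q n x y)) := by
    intro x n
    by_cases h : x < omega1
    · obtain ⟨y, hy⟩ := hstep n x h
      exact ⟨y, fun _ => hy⟩
    · exact ⟨0, fun hx => absurd hx h⟩
  choose pick hpick using pickex
  set g : ℕ → Ordinal := fun n => Nat.rec x0 (fun n x => pick x n) n with hg
  have hg0 : g 0 = x0 := rfl
  have hgs : ∀ n, g (n + 1) = pick (g n) n := fun n => rfl
  have hlt : ∀ n, g n < omega1 := by
    intro n
    induction n with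
    | zero => exact hx0
    | succ n ih =>
      rw [hgs n]
      exact (hpick (g n) n ih).2.1
  have hQ : ∀ n, Q n (g n) (g (n + 1)) := by
    intro n
    rw [hgs n]
    exact (hpick (g n) n (hlt n)).2.2
  have hmono : StrictMono g := by
    apply strictMono_nat_of_lt_succ
    intro n
    rw [hgs n]
    exact (hpick (g n) n (hlt n)).1
  set lam := ⨆ n, g n with hlam
  have hlamlt : lam < omega1 := (by have h := Ordinal.iSup_lt_omega_one (f := g) (by simpa [omega1, Cardinal.ord_aleph] using hlt); simpa [omega1, Cardinal.ord_aleph] using h)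
  have hbelow : ∀ n, g n < lam := by
    intro n
    exact lt_of_lt_of_le (hmono (Nat.lt_succ_self n)) (le_ciSup (Ordinal.bddAbove_range g) (n + 1))
  have hcof : ∀ β, β < lam → ∃ n, β < g n := by
    intro β hβ
    by_contra h
    push_neg at h
    exact absurd (ciSup_le h) (not_le.mpr hβ)
  exact ⟨g, lam, hg0, hlt, hQ, hmono, hlamlt, hbelow, hcof⟩

theorem isClub_Iio : IsClubOmega1 (Set.Iio omega1) :=
  ⟨subset_rfl, fun α h => ⟨α, h, le_rfl⟩, fun δ h _ _ => h⟩

theorem isClub_Ioo {b : Ordinal} (hb : b < omega1) : IsClubOmega1 (Set.Ioo b omega1) := by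
  refine ⟨fun x hx => hx.2, ?_, ?_⟩
  · intro α hα
    refine ⟨max α (b + 1), ⟨?_, ?_⟩, le_max_left _ _⟩
    · exact lt_of_lt_of_le (lt_add_one_self b) (le_max_right _ _)
    · exact max_lt hα (succ_lt_omega1 hb)
  · intro δ hδ hδ0 happ
    by_cases hbδ : b < δ
    · obtain ⟨β, hβ, _, hβδ⟩ := happ b hbδ
      exact ⟨lt_trans hβ.1 hβδ, hδ⟩
    · push_neg at hbδ
      obtain ⟨β, hβ, _, hβδ⟩ := happ 0 (pos_iff_ne_zero.mpr hδ0)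
      exact absurd hβ.1 (not_lt.mpr (le_of_lt (lt_of_lt_of_le hβδ hbδ)))

/-- Countable intersections of clubs are clubs. -/
theorem isClub_iInter {ι : Type*} [Countable ι] [Nonempty ι] (C : ι → Set Ordinal)
    (hC : ∀ i, IsClubOmega1 (C i)) : IsClubOmega1 (⋂ i, C i) := by
  obtain ⟨e0, he0⟩ := exists_surjective_nat ι
  set e : ℕ → ι := fun k => e0 (Nat.unpair k).1 with he
  have hehit : ∀ (i : ι) (n : ℕ), ∃ k, n ≤ k ∧ e k = i := by
    intro i n
    obtain ⟨m, hm⟩ := he0 i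
    refine ⟨Nat.pair m n, Nat.right_le_pair m n, ?_⟩
    simp [he, Nat.unpair_pair, hm]
  refine ⟨fun x hx => (hC (Classical.arbitrary ι)).1 (Set.mem_iInter.mp hx _), ?_, ?_⟩
  · -- unbounded
    intro α hα
    obtain ⟨g, lam, hg0, hlt, hQ, hmono, hlamlt, hbelow, hcof⟩ :=
      build_limit (fun n _ y => y ∈ C (e n)) α hα (by
        intro n x hx
        obtain ⟨β, hβ, hβx⟩ := (hC (e n)).2.1 (x + 1) (succ_lt_omega1 hx)
        exact ⟨β, lt_of_lt_of_le (lt_add_one_self x) hβx, (hC (e n)).1 hβ, hβ⟩)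
    have hlamC : ∀ i, lam ∈ C i := by
      intro i
      refine (hC i).2.2 lam hlamlt ?_ ?_
      · intro h0
        rw [h0] at hbelow
        exact absurd (hbelow 0) (by simp [not_lt_zero])
      · intro α' hα'
        obtain ⟨n, hn⟩ := hcof α' hα'
        obtain ⟨k, hkn, hki⟩ := hehit i n
        refine ⟨g (k + 1), by rw [← hki]; exact hQ k, ?_, hbelow (k + 1)⟩
        exact lt_of_lt_of_le hn (le_of_lt (hmono (Nat.lt_succ_of_le hkn)))
    exact ⟨lam, Set.mem_iInter.mpr hlamC, le_of_lt (lt_of_le_of_lt (hg0 ▸ le_rfl : α ≤ g 0)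
      (hbelow 0))⟩
  · -- closed
    intro δ hδ hδ0 happ
    refine Set.mem_iInter.mpr fun i => (hC i).2.2 δ hδ hδ0 ?_
    intro α hα
    obtain ⟨β, hβ, hβ1, hβ2⟩ := happ α hα
    exact ⟨β, Set.mem_iInter.mp hβ i, hβ1, hβ2⟩

theorem isClub_inter {C D : Set Ordinal} (hC : IsClubOmega1 C) (hD : IsClubOmega1 D) : IsClubOmega1 (C ∩ D) := by
  have h := isClub_iInter (fun b : Bool => if b then C else D)
    (by intro b; cases b <;> simpa)
  convert h using 1
  ext x
  simp only [Set.mem_inter_iff, Set.mem_iInter, Bool.forall_bool]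
  tauto

theorem isClub_nonempty {C : Set Ordinal} (hC : IsClubOmega1 C) : C.Nonempty := by
  obtain ⟨β, hβ, _⟩ := hC.2.1 0 omega1_pos
  exact ⟨β, hβ⟩

theorem isClub_isStationary {C : Set Ordinal} (hC : IsClubOmega1 C) : IsStationaryOmega1 C := by
  intro C' hC'
  exact isClub_nonempty (isClub_inter hC hC')

theorem isStationary_inter_club {S C : Set Ordinal} (hS : IsStationaryOmega1 S) (hC : IsClubOmega1 C) :
    IsStationaryOmega1 (S ∩ C) := by
  intro C' hC'
  obtain ⟨x, hx⟩ := hS (C ∩ C') (isClub_inter hC hC')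
  exact ⟨x, ⟨hx.1, hx.2.1⟩, hx.2.2⟩

theorem isStationary_nonempty {S : Set Ordinal} (hS : IsStationaryOmega1 S) : S.Nonempty := by
  obtain ⟨x, hx⟩ := hS (Set.Iio omega1) isClub_Iio
  exact ⟨x, hx.1⟩

/-- The diagonal intersection of a family of clubs. -/
def diagInter (C : Ordinal → Set Ordinal) : Set Ordinal :=
  {lam | lam < omega1 ∧ ∀ γ < lam, lam ∈ C γ}

theorem isClub_diagInter (C : Ordinal → Set Ordinal) (hC : ∀ γ, IsClubOmega1 (C γ)) :
    IsClubOmega1 (diagInter C) := by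
  have hIic : ∀ x : Ordinal, x < omega1 → IsClubOmega1 (⋂ γ : (Set.Iic x), C γ.1) := by
    intro x hx
    haveI : Countable (Set.Iic x) := (countable_Iic_omega1 hx).to_subtype
    haveI : Nonempty (Set.Iic x) := ⟨⟨0, zero_le (a := x)⟩⟩
    exact isClub_iInter (fun γ : (Set.Iic x) => C γ.1) (fun γ : (Set.Iic x) => hC γ.1)
  refine ⟨fun x hx => hx.1, ?_, ?_⟩
  · -- unbounded
    intro α hα
    obtain ⟨g, lam, hg0, hlt, hQ, hmono, hlamlt, hbelow, hcof⟩ :=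
      build_limit (fun _ x y => ∀ γ ≤ x, y ∈ C γ) α hα (by
        intro n x hx
        obtain ⟨β, hβ, hβx⟩ := (hIic x hx).2.1 (x + 1) (succ_lt_omega1 hx)
        refine ⟨β, lt_of_lt_of_le (lt_add_one_self x) hβx, (hIic x hx).1 hβ, ?_⟩
        intro γ hγ
        exact Set.mem_iInter.mp hβ ⟨γ, hγ⟩)
    refine ⟨lam, ⟨hlamlt, ?_⟩, le_of_lt (lt_of_le_of_lt (hg0 ▸ le_rfl : α ≤ g 0) (hbelow 0))⟩
    intro γ hγ
    obtain ⟨m, hm⟩ := hcof γ hγ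
    refine (hC γ).2.2 lam hlamlt ?_ ?_
    · intro h0
      rw [h0] at hbelow
      exact absurd (hbelow 0) (by simp [not_lt_zero])
    · intro α' hα'
      obtain ⟨n, hn⟩ := hcof α' hα'
      set k := max m n with hk
      refine ⟨g (k + 1), ?_, ?_, hbelow (k + 1)⟩
      · exact hQ k γ (le_of_lt (lt_of_lt_of_le hm (hmono.monotone (le_max_left m n))))
      · exact lt_of_lt_of_le hn (le_of_lt (hmono (Nat.lt_succ_of_le (le_max_right m n))))
  · -- closed
    intro δ hδ hδ0 happ
    refine ⟨hδ, ?_⟩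
    intro γ hγ
    refine (hC γ).2.2 δ hδ hδ0 ?_
    intro α hα
    obtain ⟨β, hβ, hβ1, hβ2⟩ := happ (max α γ) (max_lt hα hγ)
    refine ⟨β, hβ.2 γ (lt_of_le_of_lt (le_max_right α γ) hβ1), ?_, hβ2⟩
    exact lt_of_le_of_lt (le_max_left α γ) hβ1

/-- Fodor's pressing-down lemma for `ω₁` (with our custom notions). -/
theorem fodor {S : Set Ordinal} (hS : IsStationaryOmega1 S) (f : Ordinal → Ordinal)
    (hreg : ∀ x ∈ S, f x < x) : ∃ c, IsStationaryOmega1 {x ∈ S | f x = c} := by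
  by_contra h
  push_neg at h
  have hcl : ∀ c, ∃ C, IsClubOmega1 C ∧ {x ∈ S | f x = c} ∩ C = ∅ := by
    intro c
    have := h c
    rw [IsStationaryOmega1] at this
    push_neg at this
    obtain ⟨C, hC, hCe⟩ := this
    exact ⟨C, hC, hCe⟩
  choose Cf hCf hCfe using hcl
  obtain ⟨x, hxS, hxD⟩ := hS (diagInter Cf) (isClub_diagInter Cf hCf)
  have hx1 : x ∈ Cf (f x) := hxD.2 (f x) (hreg x hxS)
  have : x ∈ {y ∈ S | f y = f x} ∩ Cf (f x) := ⟨⟨hxS, rfl⟩, hx1⟩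
  rw [hCfe (f x)] at this
  exact this

/-- Countable pigeonhole on stationary sets. -/
theorem stat_pigeonhole {S : Set Ordinal} (hS : IsStationaryOmega1 S) {β : Type*} [Countable β]
    (f : Ordinal → β) : ∃ v, IsStationaryOmega1 {x ∈ S | f x = v} := by
  by_contra h
  push_neg at h
  have hcl : ∀ v, ∃ C, IsClubOmega1 C ∧ {x ∈ S | f x = v} ∩ C = ∅ := by
    intro v
    have := h v
    rw [IsStationaryOmega1] at this
    push_neg at this
    obtain ⟨C, hC, hCe⟩ := this
    exact ⟨C, hC, hCe⟩
  choose Cf hCf hCfe using hcl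
  haveI : Nonempty β := ⟨f 0⟩
  obtain ⟨x, hxS, hxC⟩ := hS (⋂ v, Cf v) (isClub_iInter Cf hCf)
  have : x ∈ {y ∈ S | f y = f x} ∩ Cf (f x) := ⟨⟨hxS, rfl⟩, Set.mem_iInter.mp hxC (f x)⟩
  rw [hCfe (f x)] at this
  exact this

/-- Every stationary subset of `Ioo 0 ω₁` splits into two disjoint stationary subsets. -/
theorem stat_split {S : Set Ordinal} (hsub : S ⊆ Set.Ioo 0 omega1) (hS : IsStationaryOmega1 S) :
    ∃ S₁ S₂, S₁ ⊆ S ∧ S₂ ⊆ S ∧ IsStationaryOmega1 S₁ ∧ IsStationaryOmega1 S₂ ∧ S₁ ∩ S₂ = ∅ := by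
  have hseq : ∀ lam, lam ∈ S → ∃ t : ℕ → Ordinal, (∀ n, t n < lam) ∧ ∀ β < lam, ∃ n, t n = β := by
    intro lam hlam
    have h1 : (Set.Iio lam).Countable := countable_Iio_omega1 (hsub hlam).2
    have h2 : (Set.Iio lam).Nonempty := ⟨0, (hsub hlam).1⟩
    obtain ⟨t, ht⟩ := h1.exists_eq_range h2
    refine ⟨t, ?_, ?_⟩
    · intro n
      have : t n ∈ Set.Iio lam := by rw [ht]; exact Set.mem_range_self n
      exact this
    · intro β hβ
      have : β ∈ Set.range t := by rw [← ht]; exact hβ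
      rw [Set.mem_range] at this
      exact this
  have hseq' : ∀ lam, ∃ t : ℕ → Ordinal,
      lam ∈ S → ((∀ n, t n < lam) ∧ ∀ β < lam, ∃ n, t n = β) := by
    intro lam
    by_cases h : lam ∈ S
    · obtain ⟨t, ht⟩ := hseq lam h
      exact ⟨t, fun _ => ht⟩
    · exact ⟨fun _ => 0, fun hx => absurd hx h⟩
  choose s hs using hseq'
  -- Claim A
  have claimA : ∃ n : ℕ, ∀ b < omega1, IsStationaryOmega1 {lam ∈ S | b ≤ s lam n} := by
    by_contra hA
    push_neg at hA
    have hA' : ∀ n : ℕ, ∃ b, b < omega1 ∧ ∃ C, IsClubOmega1 C ∧ {lam ∈ S | b ≤ s lam n} ∩ C = ∅ := by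
      intro n
      obtain ⟨b, hb, hstat⟩ := hA n
      rw [IsStationaryOmega1] at hstat
      push_neg at hstat
      obtain ⟨C, hC, hCe⟩ := hstat
      exact ⟨b, hb, C, hC, hCe⟩
    choose b hb C hC hCe using hA'
    obtain ⟨bs, hbs, hbslt⟩ := bound_of_countable (A := Set.range b)
      (by rintro x ⟨n, rfl⟩; exact hb n) (Set.countable_range b)
    obtain ⟨lam, hlamS, hlamC⟩ := hS ((⋂ n, C n) ∩ Set.Ioo bs omega1)
      (isClub_inter (isClub_iInter C hC) (isClub_Ioo hbs))
    obtain ⟨n0, hn0⟩ := (hs lam hlamS).2 bs hlamC.2.1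
    have : lam ∈ {mu ∈ S | b n0 ≤ s mu n0} ∩ C n0 := by
      refine ⟨⟨hlamS, ?_⟩, Set.mem_iInter.mp hlamC.1 n0⟩
      rw [hn0]
      exact le_of_lt (hbslt (b n0) (Set.mem_range_self n0))
    rw [hCe n0] at this
    exact this
  obtain ⟨n, hn⟩ := claimA
  set f : Ordinal → Ordinal := fun lam => s lam n with hf
  have hreg : ∀ x ∈ S, f x < x := fun x hx => (hs x hx).1 n
  obtain ⟨c₀, hc₀⟩ := fodor hS f hreg
  obtain ⟨x₀, hx₀⟩ := isStationary_nonempty hc₀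
  have hc₀lt : c₀ < omega1 := by
    rw [← hx₀.2]
    exact lt_trans (hreg x₀ hx₀.1) (hsub hx₀.1).2
  have hS' : IsStationaryOmega1 {lam ∈ S | c₀ + 1 ≤ s lam n} := hn (c₀ + 1) (succ_lt_omega1 hc₀lt)
  obtain ⟨c₁, hc₁⟩ := fodor hS' f (fun x hx => hreg x hx.1)
  obtain ⟨x₁, hx₁⟩ := isStationary_nonempty hc₁
  have hc₁ge : c₀ + 1 ≤ c₁ := by
    rw [← hx₁.2]
    exact hx₁.1.2
  refine ⟨{x ∈ S | f x = c₀}, {x ∈ {lam ∈ S | c₀ + 1 ≤ s lam n} | f x = c₁},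
    fun x hx => hx.1, fun x hx => hx.1.1, hc₀, hc₁, ?_⟩
  ext x
  simp only [Set.mem_inter_iff, Set.mem_setOf_eq, Set.mem_empty_iff_false, iff_false]
  rintro ⟨⟨_, h0⟩, ⟨_, h1⟩⟩
  rw [h0] at h1
  rw [h1] at hc₁ge
  exact absurd hc₁ge (by simpa using (lt_add_one_self c₀).not_le)

theorem self_mem_hatA (a : Ordinal → Set ℕ) (γ : Ordinal) : γ ∈ hatA a γ := by
  refine ⟨le_rfl, ∅, by simp, ?_⟩
  simp [unionFin]

theorem mem_unionFin {a : Ordinal → Set ℕ} {F : Finset Ordinal} {x : ℕ} :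
    x ∈ unionFin a F ↔ ∃ γ ∈ F, x ∈ a γ := by
  simp [unionFin]

end Stmt11Aux

/-- For a proper coherent `ω₁`-sequence with the ScP: if `S ⊆ ω₁` is a cover, then
there is a finite `F ⊆ ω₁` such that for every `α ∈ ω₁ ∖ â_F` the set
`{γ ∈ S : α ∈ â_γ}` is uncountable. -/
theorem stmt11 (a : Ordinal → Set ℕ)
    (hcoh : CoherentOn (Iio omega1) a) (hprop : ProperOn (Iio omega1) a)
    (hScP : HasScP (Iio omega1) a)
    (S : Set Ordinal) (hS : S ⊆ Iio omega1)
    (hcover : (⋃ γ ∈ S, hatA a γ) = Iio omega1) :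
    ∃ F : Finset Ordinal, (↑F : Set Ordinal) ⊆ Iio omega1 ∧
      ∀ α < omega1, α ∉ (⋃ γ ∈ (↑F : Set Ordinal), hatA a γ) →
        ¬ ({ γ ∈ S | α ∈ hatA a γ }).Countable := by
  classical
  -- Step 0: for every `lam < ω₁` choose a cover element `gS lam ∈ S` and a witness `W lam`.
  have hcov : ∀ lam : Ordinal, ∃ (γ : Ordinal) (Wl : Finset Ordinal), lam < omega1 →
      (γ ∈ S ∧ lam ≤ γ ∧ (∀ ν ∈ Wl, ν < lam) ∧ a lam \ a γ ⊆ unionFin a Wl) := by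
    intro lam
    by_cases h : lam < omega1
    · have hmem : lam ∈ ⋃ γ ∈ S, hatA a γ := by rw [hcover]; exact h
      simp only [Set.mem_iUnion] at hmem
      obtain ⟨γ, hγS, hγ⟩ := hmem
      obtain ⟨hle, Wl, hW1, hW2⟩ := hγ
      exact ⟨γ, Wl, fun _ => ⟨hγS, hle, hW1, hW2⟩⟩
    · exact ⟨0, ∅, fun hx => absurd hx h⟩
  choose gS W hgW using hcov
  -- Step 1: press down the sup of the witness on the stationary set `Ioo 0 ω₁`.
  set f : Ordinal → Ordinal := fun lam => (W lam).sup id with hfdef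
  have hS0club : IsClubOmega1 (Set.Ioo (0 : Ordinal) omega1) := isClub_Ioo omega1_pos
  have hreg : ∀ x ∈ Set.Ioo (0 : Ordinal) omega1, f x < x := by
    intro x hx
    have hbot : (⊥ : Ordinal) < x := by rw [Ordinal.bot_eq_zero]; exact hx.1
    refine (Finset.sup_lt_iff hbot).mpr ?_
    intro ν hν
    exact (hgW x hx.2).2.2.1 ν hν
  obtain ⟨c, hc⟩ := fodor (isClub_isStationary hS0club) f hreg
  have hclt : c < omega1 := by
    obtain ⟨x0, hx0⟩ := isStationary_nonempty hc
    rw [← hx0.2]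
    exact lt_trans (hreg x0 hx0.1) hx0.1.2
  -- Step 2: pigeonhole the witness itself.
  haveI hBcnt : Countable {F : Finset Ordinal // ↑F ⊆ Set.Iic c} := by
    haveI : Countable (Set.Iic c) := (countable_Iic_omega1 hclt).to_subtype
    have hmapeq : ∀ F : {F : Finset Ordinal // ↑F ⊆ Set.Iic c},
        ((F.1.subtype (· ∈ Set.Iic c)).map (Function.Embedding.subtype _)) = F.1 := by
      intro F
      rw [Finset.subtype_map]
      exact Finset.filter_true_of_mem (fun x hx => F.2 hx)
    refine Function.Injective.countable
      (f := fun F : {F : Finset Ordinal // ↑F ⊆ Set.Iic c} => F.1.subtype (· ∈ Set.Iic c)) ?_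
    intro F G h
    apply Subtype.ext
    rw [← hmapeq F, ← hmapeq G]
    exact congrArg _ h
  set m : Ordinal → {F : Finset Ordinal // ↑F ⊆ Set.Iic c} := fun lam =>
    if h : ↑(W lam) ⊆ Set.Iic c then ⟨W lam, h⟩ else ⟨∅, by simp⟩ with hmdef
  obtain ⟨v, hv⟩ := stat_pigeonhole hc m
  set V : Finset Ordinal := v.1 with hVdef
  have hVsub : ↑V ⊆ Set.Iic c := v.2
  have hVlt : ∀ ν ∈ V, ν < omega1 := fun ν h => lt_of_le_of_lt (hVsub h) hclt
  set SN : Set Ordinal := {x ∈ {x ∈ Set.Ioo (0 : Ordinal) omega1 | f x = c} | m x = v} with hSNdef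
  have hSNstat : IsStationaryOmega1 SN := hv
  have hSNsub : SN ⊆ Set.Ioo (0 : Ordinal) omega1 := fun x hx => hx.1.1
  have hWV : ∀ lam ∈ SN, W lam = V := by
    intro lam hlam
    have hsub : ↑(W lam) ⊆ Set.Iic c := by
      intro ν hν
      have : (id ν : Ordinal) ≤ (W lam).sup id := Finset.le_sup hν
      rw [show (W lam).sup id = c from hlam.1.2] at this
      exact this
    have : m lam = v := hlam.2
    rw [hmdef] at this
    simp only [dif_pos hsub] at this
    rw [hVdef, ← this]
  -- Step 3: the diagonal club killing non-stationary traces.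
  set T : Ordinal → Set Ordinal := fun α => {lam | lam ∈ SN ∧ α ∈ hatA a lam} with hTdef
  have hDex : ∀ α, ∃ C, IsClubOmega1 C ∧ (¬ IsStationaryOmega1 (T α) → T α ∩ C = ∅) := by
    intro α
    by_cases h : IsStationaryOmega1 (T α)
    · exact ⟨Set.Iio omega1, isClub_Iio, fun hn => absurd h hn⟩
    · have h' := h
      rw [IsStationaryOmega1] at h'
      push_neg at h'
      obtain ⟨C, hC, hCe⟩ := h'
      exact ⟨C, hC, fun _ => hCe⟩
  choose Df hDf hDfe using hDex
  set Sstar : Set Ordinal := SN ∩ diagInter Df with hSstardef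
  have hSstarstat : IsStationaryOmega1 Sstar := isStationary_inter_club hSNstat (isClub_diagInter Df hDf)
  have hstar : ∀ lam ∈ Sstar, ∀ α, α < lam → ¬ IsStationaryOmega1 (T α) → α ∉ hatA a lam := by
    intro lam hlam α hαlam hnst hmem
    have h1 : lam ∈ Df α := hlam.2.2 α hαlam
    have h2 : lam ∈ T α ∩ Df α := ⟨⟨hlam.1, hmem⟩, h1⟩
    rw [hDfe α hnst] at h2
    exact h2
  have hSstarsub : Sstar ⊆ Set.Ioo (0 : Ordinal) omega1 := fun x hx => hSNsub hx.1
  -- Step 4: split and apply ScP twice.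
  obtain ⟨T1, T2, hT1sub, hT2sub, hT1stat, hT2stat, hT12⟩ := stat_split hSstarsub hSstarstat
  have hscp := hScP (fun x hx => hx)
  obtain ⟨F1, hF1⟩ := hscp T1 (fun x hx => (hSstarsub (hT1sub hx)).2) hT1stat
  obtain ⟨F2, hF2⟩ := hscp T2 (fun x hx => (hSstarsub (hT2sub hx)).2) hT2stat
  refine ⟨V ∪ F1 ∪ F2, ?_, ?_⟩
  · -- the finite set is contained in ω₁
    intro γ hγ
    simp only [Finset.coe_union, Set.mem_union, Finset.mem_coe] at hγ
    rcases hγ with (h | h) | h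
    · exact hVlt γ h
    · have : γ ∈ ⋃ δ ∈ T1 ∪ (↑F1 : Set Ordinal), hatA a δ :=
        Set.mem_biUnion (Set.mem_union_right _ h) (self_mem_hatA a γ)
      rw [hF1] at this
      exact this
    · have : γ ∈ ⋃ δ ∈ T2 ∪ (↑F2 : Set Ordinal), hatA a δ :=
        Set.mem_biUnion (Set.mem_union_right _ h) (self_mem_hatA a γ)
      rw [hF2] at this
      exact this
  · intro α hα hnotmem hcnt
    have hmemF : ∀ γ, γ ∈ (↑(V ∪ F1 ∪ F2) : Set Ordinal) → α ∈ hatA a γ → False :=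
      fun γ h1 h2 => hnotmem (Set.mem_biUnion h1 h2)
    -- the bound on `S_α`
    obtain ⟨θ, hθ, hθlt⟩ := bound_of_countable (A := {γ ∈ S | α ∈ hatA a γ})
      (fun x hx => hS hx.1) hcnt
    by_cases hT : IsStationaryOmega1 (T α)
    · -- case (a): the trace is stationary; `α` is covered by some element of `V`.
      obtain ⟨lam, hlamT, hlamI⟩ := hT (Set.Ioo (max θ α) omega1) (isClub_Ioo (max_lt hθ hα))
      have hθlam : θ < lam := lt_of_le_of_lt (le_max_left θ α) hlamI.1
      have hαlam : α < lam := lt_of_le_of_lt (le_max_right θ α) hlamI.1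
      obtain ⟨hlamSN, hαhat⟩ := hlamT
      obtain ⟨hαle, Wα, hWα1, hWα2⟩ := hαhat
      have hlamlt : lam < omega1 := hlamI.2
      obtain ⟨hγS, hγle, -, hγW⟩ := hgW lam hlamlt
      have hWlam : W lam = V := hWV lam hlamSN
      rw [hWlam] at hγW
      have hθγ : θ < gS lam := lt_of_lt_of_le hθlam hγle
      have hnothat : α ∉ hatA a (gS lam) := by
        intro h
        have hmem : gS lam ∈ {γ ∈ S | α ∈ hatA a γ} := ⟨hγS, h⟩
        exact absurd (hθlt (gS lam) hmem) (not_lt.mpr (le_of_lt hθγ))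
      have hαγle : α ≤ gS lam := le_trans (le_of_lt hαlam) hγle
      obtain ⟨E, hE1, hE2⟩ := hcoh α (gS lam) hαγle (hS hγS)
      rcases hE2 with hE | hE
      swap
      · exact hnothat ⟨hαγle, E, hE1, fun x hx => (hE hx.1).resolve_left hx.2⟩
      by_cases hex : ∃ η ∈ V, α ≤ η ∧ α ∈ hatA a η
      · obtain ⟨η, hηV, -, hηhat⟩ := hex
        refine hmemF η ?_ hηhat
        simp only [Finset.coe_union, Set.mem_union, Finset.mem_coe]
        exact Or.inl (Or.inl hηV)
      · push_neg at hex
        have hKex : ∀ η, ∃ K : Finset Ordinal, (∀ ν ∈ K, ν < α) ∧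
            (η ∈ V → α ≤ η → a α ∩ a η ⊆ unionFin a K) := by
          intro η
          by_cases hη : η ∈ V ∧ α ≤ η
          · obtain ⟨K, hK1, hK2⟩ := hcoh α η hη.2 (hVlt η hη.1)
            rcases hK2 with h | h
            · exact ⟨K, hK1, fun _ _ => h⟩
            · exact absurd ⟨hη.2, K, hK1, fun x hx => (h hx.1).resolve_left hx.2⟩
                (hex η hη.1 hη.2)
          · exact ⟨∅, by simp, fun h1 h2 => absurd ⟨h1, h2⟩ hη⟩
        choose K hK1 hK2 using hKex
        set G : Finset Ordinal := ((Wα ∪ E) ∪ V.filter (· < α)) ∪ V.biUnion K with hGdef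
        have hGlt : ∀ ν ∈ G, ν < α := by
          intro ν hν
          simp only [hGdef, Finset.mem_union, Finset.mem_filter, Finset.mem_biUnion] at hν
          rcases hν with ((h | h) | h) | ⟨η, hηV, hνK⟩
          · exact hWα1 ν h
          · exact hE1 ν h
          · exact h.2
          · exact hK1 η ν hνK
        have hGcov : a α ⊆ unionFin a G := by
          intro x hx
          have hmem3 : x ∈ unionFin a Wα ∨ x ∈ unionFin a V ∨ x ∈ unionFin a E := by
            by_cases h1 : x ∈ a (gS lam)
            · exact Or.inr (Or.inr (hE ⟨hx, h1⟩))
            · by_cases h2 : x ∈ a lam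
              · exact Or.inr (Or.inl (hγW ⟨h2, h1⟩))
              · exact Or.inl (hWα2 ⟨hx, h2⟩)
          rw [mem_unionFin]
          rcases hmem3 with h | h | h
          · rw [mem_unionFin] at h
            obtain ⟨ν, hν, hx'⟩ := h
            refine ⟨ν, ?_, hx'⟩
            simp only [hGdef, Finset.mem_union]
            exact Or.inl (Or.inl (Or.inl hν))
          · rw [mem_unionFin] at h
            obtain ⟨ν, hν, hx'⟩ := h
            rcases lt_or_ge ν α with hνα | hνα
            · refine ⟨ν, ?_, hx'⟩
              simp only [hGdef, Finset.mem_union, Finset.mem_filter]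
              exact Or.inl (Or.inr ⟨hν, hνα⟩)
            · have hx2 := hK2 ν hν hνα ⟨hx, hx'⟩
              rw [mem_unionFin] at hx2
              obtain ⟨κ, hκ, hxκ⟩ := hx2
              refine ⟨κ, ?_, hxκ⟩
              simp only [hGdef, Finset.mem_union, Finset.mem_biUnion]
              exact Or.inr ⟨ν, hν, hκ⟩
          · rw [mem_unionFin] at h
            obtain ⟨ν, hν, hx'⟩ := h
            refine ⟨ν, ?_, hx'⟩
            simp only [hGdef, Finset.mem_union]
            exact Or.inl (Or.inl (Or.inr hν))
        exact hprop α hα G hGlt hGcov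
    · -- case (b): the trace is non-stationary.
      have hchase : ∀ (Tset : Set Ordinal) (Fset : Finset Ordinal),
          Tset ⊆ Sstar → (⋃ γ ∈ Tset ∪ (↑Fset : Set Ordinal), hatA a γ) = Set.Iio omega1 →
          (∃ γ ∈ Fset, α ∈ hatA a γ) ∨ α ∈ Tset := by
        intro Tset Fset hTsub hFeq
        have h1 : α ∈ ⋃ γ ∈ Tset ∪ (↑Fset : Set Ordinal), hatA a γ := by rw [hFeq]; exact hα
        simp only [Set.mem_iUnion] at h1
        obtain ⟨γ, hγmem, hγhat⟩ := h1
        rcases hγmem with h | h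
        · right
          have hγα : γ = α := by
            by_contra hne
            have hαγ : α < γ := lt_of_le_of_ne hγhat.1 (fun hh => hne (hh.symm ▸ rfl))
            exact hstar γ (hTsub h) α hαγ hT hγhat
          rw [← hγα]
          exact h
        · exact Or.inl ⟨γ, h, hγhat⟩
      rcases hchase T1 F1 hT1sub hF1 with ⟨γ, hγF, hγhat⟩ | hα1
      · refine hmemF γ ?_ hγhat
        simp only [Finset.coe_union, Set.mem_union, Finset.mem_coe]
        exact Or.inl (Or.inr hγF)
      rcases hchase T2 F2 hT2sub hF2 with ⟨γ, hγF, hγhat⟩ | hα2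
      · refine hmemF γ ?_ hγhat
        simp only [Finset.coe_union, Set.mem_union, Finset.mem_coe]
        exact Or.inr hγF
      have : α ∈ T1 ∩ T2 := ⟨hα1, hα2⟩
      rw [hT12] at this
      exact this

end
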